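/- For the braided Hopf algebra H(X) (shuffle product, deconcatenation coproduct), the antipode axiom holds in the form: for all r ≥ 1, ∑_{s=0}^{r} B(s, r-s) ∘ (S_s ⊗ id^{⊗(r-s)}) = 0, where S_s = (-1)^s times the Matsumoto lift of the longest element of the symmetric group S_s acting on the first s strands. -/

import Mathlib

/- We work in the braid group algebra, modelled as an associative ring `A` equipped with a
family `ψ i` of elements satisfying the braid relations.  The braided binomials `Bb`
(sums of Matsumoto lifts of shuffle permutations) are encoded through their defining
recursion `B(r+1,s) = B(r,s)^{[1]} + B(r+1,s-1)^{[1]} · T_{r+1,1}`. -/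

variable {A : Type*} [Ring A]

/-- Shift of the generator family by `k`: `(shiftFam ψ k) i = ψ (i + k)`. -/
def shiftFam (ψ : ℕ → A) (k : ℕ) : ℕ → A := fun i => ψ (i + k)

/-- The descending product `ψ (j+n-1) ⋯ ψ (j+1) ψ j`. -/
def fall (ψ : ℕ → A) : ℕ → ℕ → A
  | _, 0 => 1
  | j, n + 1 => fall ψ (j + 1) n * ψ j

/-- `T_{m,n} = (ψ_n ⋯ ψ_1)(ψ_{n+1} ⋯ ψ_2) ⋯ (ψ_{n+m-1} ⋯ ψ_m)`, the braiding of the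
first `m` strands past the next `n` strands. -/
def Tb (ψ : ℕ → A) : ℕ → ℕ → A
  | 0, _ => 1
  | m + 1, n => Tb ψ m n * fall ψ (m + 1) n

/-- The braided binomial `B(r,s)`: the sum of the Matsumoto lifts of all `(r,s)`-shuffle
permutations. -/
def Bb (ψ : ℕ → A) : ℕ → ℕ → A
  | 0, _ => 1
  | _ + 1, 0 => 1
  | r + 1, s + 1 =>
      Bb (shiftFam ψ 1) r (s + 1) + Bb (shiftFam ψ 1) (r + 1) s * Tb ψ (r + 1) 1
  termination_by r s => (r, s)

/-- The signed half-twist: `S_s = (-1)^s Ψ_1 (Ψ_2Ψ_1) ⋯ (Ψ_{s-1} ⋯ Ψ_1)` is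
`(-1)^s • halfTwist ψ s`, the Matsumoto lift of the longest element of `S_s`. -/
def halfTwist (ψ : ℕ → A) : ℕ → A
  | 0 => 1
  | s + 1 => halfTwist ψ s * fall ψ 1 s

lemma fall_succ_left (ψ : ℕ → A) (j n : ℕ) :
    fall ψ j (n + 1) = ψ (j + n) * fall ψ j n := by
  induction n generalizing j with
  | zero => simp [fall]
  | succ n ih =>
      have h1 : fall ψ j (n + 2) = fall ψ (j + 1) (n + 1) * ψ j := rfl
      have h2 : fall ψ j (n + 1) = fall ψ (j + 1) n * ψ j := rfl
      rw [h1, ih (j + 1), h2, mul_assoc]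
      congr 2
      omega

lemma comm_fall (ψ : ℕ → A) (hcomm : ∀ i j, i + 2 ≤ j → ψ i * ψ j = ψ j * ψ i)
    (j n k : ℕ) (h : j + n + 1 ≤ k) :
    ψ k * fall ψ j n = fall ψ j n * ψ k := by
  induction n generalizing j with
  | zero => simp [fall]
  | succ n ih =>
      have h1 : fall ψ j (n + 1) = fall ψ (j + 1) n * ψ j := rfl
      rw [h1, ← mul_assoc, ih (j + 1) (by omega), mul_assoc,
        ← hcomm j k (by omega), ← mul_assoc]

lemma comm_halfTwist (ψ : ℕ → A) (hcomm : ∀ i j, i + 2 ≤ j → ψ i * ψ j = ψ j * ψ i)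
    (s k : ℕ) (h : s + 1 ≤ k) :
    ψ k * halfTwist ψ s = halfTwist ψ s * ψ k := by
  induction s with
  | zero => simp [halfTwist]
  | succ s ih =>
      have h1 : halfTwist ψ (s + 1) = halfTwist ψ s * fall ψ 1 s := rfl
      rw [h1, ← mul_assoc, ih (by omega), mul_assoc,
        comm_fall ψ hcomm 1 s k (by omega), ← mul_assoc]

lemma key_twist (ψ : ℕ → A) (hcomm : ∀ i j, i + 2 ≤ j → ψ i * ψ j = ψ j * ψ i)
    (s : ℕ) : Tb ψ s 1 * halfTwist ψ s = halfTwist ψ (s + 1) := by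
  induction s with
  | zero => simp [Tb, halfTwist, fall]
  | succ s ih =>
      have hT : Tb ψ (s + 1) 1 = Tb ψ s 1 * ψ (s + 1) := by
        show Tb ψ s 1 * fall ψ (s + 1) 1 = _
        congr 1
        show fall ψ (s + 2) 0 * ψ (s + 1) = ψ (s + 1)
        simp [fall]
      have hH : halfTwist ψ (s + 1) = halfTwist ψ s * fall ψ 1 s := rfl
      have hH2 : halfTwist ψ (s + 2) = halfTwist ψ (s + 1) * fall ψ 1 (s + 1) := rfl
      rw [hT, hH, hH2, fall_succ_left ψ 1 s]
      rw [mul_assoc (Tb ψ s 1), ← mul_assoc (ψ (s + 1)),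
        comm_halfTwist ψ hcomm s (s + 1) (by omega)]
      rw [show (1 + s) = s + 1 by omega, ← ih]
      simp [mul_assoc]

lemma neg_one_pow_comm (n : ℕ) (x : A) : (-1 : A) ^ n * x = x * (-1 : A) ^ n :=
  ((Commute.neg_one_left x).pow_left n).eq

/-- the antipode axiom for the braided Hopf algebra `H(X)`: for all `r ≥ 1`,
`∑_{s=0}^{r} B(s, r-s) ∘ (S_s ⊗ id^{⊗(r-s)}) = 0`, where
`S_s = (-1)^s · (Matsumoto lift of the longest element of 𝔖_s)` acts on the first `s`
strands. -/
theorem antipode_axiom_shuffle (ψ : ℕ → A)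
    (hbraid : ∀ i, ψ i * ψ (i + 1) * ψ i = ψ (i + 1) * ψ i * ψ (i + 1))
    (hcomm : ∀ i j, i + 2 ≤ j → ψ i * ψ j = ψ j * ψ i)
    (r : ℕ) (hr : 1 ≤ r) :
    (∑ s ∈ Finset.range (r + 1),
        Bb ψ s (r - s) * ((-1 : A) ^ s * halfTwist ψ s)) = 0 := by
  set v : ℕ → A := fun s =>
    match s with
    | 0 => 0
    | t + 1 =>
        if t < r then
          Bb (shiftFam ψ 1) t (r - 1 - t) * ((-1 : A) ^ t * halfTwist ψ (t + 1))
        else 0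
    with hv
  have hsum : ∀ s ∈ Finset.range (r + 1),
      Bb ψ s (r - s) * ((-1 : A) ^ s * halfTwist ψ s) = v (s + 1) - v s := by
    intro s hs
    simp only [Finset.mem_range] at hs
    match s with
    | 0 =>
        simp only [hv]
        rw [if_pos (by omega)]
        simp [Bb, halfTwist, fall]
    | t + 1 =>
        rcases eq_or_lt_of_le (Nat.lt_succ_iff.mp hs) with heq | hlt
        · -- s = r : last term
          simp only [hv]
          rw [if_neg (by omega), if_pos (by omega)]
          rw [show r - (t + 1) = 0 by omega, show r - 1 - t = 0 by omega]
          have hB : Bb ψ (t + 1) 0 = 1 := by rw [Bb]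
          have hB' : Bb (shiftFam ψ 1) t 0 = 1 := by
            match t with
            | 0 => rw [Bb]
            | t + 1 => rw [Bb]
          rw [hB, hB', pow_succ]
          simp [mul_assoc]
        · -- 1 ≤ s < r : middle terms
          obtain ⟨d, hd⟩ : ∃ d, r - (t + 1) = d + 1 := ⟨r - t - 2, by omega⟩
          simp only [hv]
          rw [if_pos (by omega), if_pos (by omega), hd,
            show r - 1 - (t + 1) = d by omega, show r - 1 - t = d + 1 by omega]
          rw [show Bb ψ (t + 1) (d + 1) =
              Bb (shiftFam ψ 1) t (d + 1) +
                Bb (shiftFam ψ 1) (t + 1) d * Tb ψ (t + 1) 1 from by rw [Bb]]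
          have key : Tb ψ (t + 1) 1 * ((-1 : A) ^ t * halfTwist ψ (t + 1)) =
              (-1 : A) ^ t * halfTwist ψ (t + 2) := by
            rw [← mul_assoc, ← neg_one_pow_comm, mul_assoc,
              key_twist ψ hcomm (t + 1)]
          rw [pow_succ]
          simp only [add_mul, mul_assoc, mul_neg, neg_mul, mul_one, key]
          abel
  rw [Finset.sum_congr rfl hsum, Finset.sum_range_sub]
  simp [hv]
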